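/- Let F and F̄ be real-valued functions of h₂ ∈ [0,M] with M ≥ 1 (F random, F̄ = E F deterministic), both absolutely continuous, satisfying for all h₂ ∈ [0,M]: |∂₂F̄| ≤ C₀, |∂₂F| ≤ C₀(1 + n^{−1/2}h₂^{−1/2}W) a.e., ∂₂²F̄ ≥ 0, and ∂₂²F ≥ −C₀ n^{−1/2} h₂^{−3/2} W in the distributional sense, where W ≥ 0 is a random variable. Then for every 0 < η < M, ∫_η^M |∂₂(F − F̄)|² dh₂ ≤ C ‖F − F̄‖_{L^∞([0,M])} (1 + n^{−1/2}η^{−1/2}W), where C depends only on C₀ and M. -/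

import Mathlib

set_option maxHeartbeats 1000000


open MeasureTheory Set

/-- Key interpolation step: if `F, F̄ : [0,M] → ℝ` (with `M ≥ 1`) satisfy
`|∂₂F̄| ≤ C₀`, `|∂₂F| ≤ C₀(1 + n^{-1/2} h₂^{-1/2} W)`, `∂₂²F̄ ≥ 0` and
`∂₂²F ≥ −C₀ n^{-1/2} h₂^{-3/2} W` on `(0,M]` for some `W ≥ 0`, then for every
`0 < η < M`,
`∫_η^M |∂₂(F − F̄)|² ≤ C ‖F − F̄‖_{L^∞([0,M])} (1 + n^{-1/2} η^{-1/2} W)`,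
where `C` depends only on `C₀` and `M`. -/
theorem derivative_L2_from_Linfty
    (C₀ M : ℝ) (hC₀ : 0 < C₀) (hM : 1 ≤ M) :
    ∃ C > 0, ∀ (n : ℕ) (W : ℝ) (F Fb : ℝ → ℝ) (η : ℝ),
      0 < n → 0 ≤ W → 0 < η → η < M →
      (∀ h₂ ∈ Ioc (0 : ℝ) M, DifferentiableAt ℝ F h₂ ∧ DifferentiableAt ℝ Fb h₂ ∧
        DifferentiableAt ℝ (deriv F) h₂ ∧ DifferentiableAt ℝ (deriv Fb) h₂) →
      ContinuousOn F (Icc (0 : ℝ) M) → ContinuousOn Fb (Icc (0 : ℝ) M) →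
      (∀ h₂ ∈ Ioc (0 : ℝ) M, |deriv Fb h₂| ≤ C₀) →
      (∀ h₂ ∈ Ioc (0 : ℝ) M,
        |deriv F h₂| ≤ C₀ * (1 + (n : ℝ) ^ (-(1 / 2 : ℝ)) * h₂ ^ (-(1 / 2 : ℝ)) * W)) →
      (∀ h₂ ∈ Ioc (0 : ℝ) M, 0 ≤ deriv (deriv Fb) h₂) →
      (∀ h₂ ∈ Ioc (0 : ℝ) M,
        -(C₀ * (n : ℝ) ^ (-(1 / 2 : ℝ)) * h₂ ^ (-(3 / 2 : ℝ)) * W) ≤ deriv (deriv F) h₂) →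
      (∫ h₂ in Ioc η M, (deriv F h₂ - deriv Fb h₂) ^ 2)
        ≤ C * sSup ((fun h₂ => |F h₂ - Fb h₂|) '' Icc (0 : ℝ) M)
            * (1 + (n : ℝ) ^ (-(1 / 2 : ℝ)) * η ^ (-(1 / 2 : ℝ)) * W) := by
  refine ⟨16 * C₀, by positivity, ?_⟩
  intro n W F Fb η hn hW hη hηM hdiff hFc hFbc hFb' hF' hFb'' hF''
  have h0M : (0 : ℝ) ≤ M := le_trans zero_le_one hM
  set α : ℝ := (n : ℝ) ^ (-(1 / 2 : ℝ)) with hαdef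
  have hα0 : 0 ≤ α := Real.rpow_nonneg (Nat.cast_nonneg n) _
  set T : ℝ := α * η ^ (-(1 / 2 : ℝ)) * W with hTdef
  have hT0 : 0 ≤ T :=
    mul_nonneg (mul_nonneg hα0 (Real.rpow_nonneg hη.le _)) hW
  set K : ℝ := C₀ * α * W with hKdef
  have hK0 : 0 ≤ K := mul_nonneg (mul_nonneg hC₀.le hα0) hW
  set G : ℝ → ℝ := fun x => F x - Fb x with hGdef
  set g : ℝ → ℝ := fun x => deriv F x - deriv Fb x with hgdef
  set g' : ℝ → ℝ := fun x => deriv (deriv F) x - deriv (deriv Fb) x with hg'def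
  set S : ℝ := sSup ((fun h₂ => |F h₂ - Fb h₂|) '' Icc (0 : ℝ) M) with hSdef
  have hsub : Icc η M ⊆ Ioc 0 M := fun x hx => ⟨lt_of_lt_of_le hη hx.1, hx.2⟩
  have hsub2 : Icc η M ⊆ Icc 0 M := Icc_subset_Icc hη.le le_rfl
  have huIcc : uIcc η M = Icc η M := uIcc_of_le hηM.le
  -- sSup bounds
  have hGcont0 : ContinuousOn (fun x => |F x - Fb x|) (Icc (0 : ℝ) M) := (hFc.sub hFbc).abs
  have hbdd : BddAbove ((fun h₂ => |F h₂ - Fb h₂|) '' Icc (0 : ℝ) M) :=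
    (isCompact_Icc.image_of_continuousOn hGcont0).bddAbove
  have hGS : ∀ x ∈ Icc (0 : ℝ) M, |G x| ≤ S := fun x hx => le_csSup hbdd ⟨x, hx, rfl⟩
  have hS0 : 0 ≤ S := le_trans (abs_nonneg _) (hGS 0 ⟨le_rfl, h0M⟩)
  -- derivative facts
  have hGd : ∀ x ∈ Ioc (0 : ℝ) M, HasDerivAt G (g x) x := fun x hx =>
    ((hdiff x hx).1.hasDerivAt).sub ((hdiff x hx).2.1.hasDerivAt)
  have hgd : ∀ x ∈ Ioc (0 : ℝ) M, HasDerivAt g (g' x) x := fun x hx =>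
    ((hdiff x hx).2.2.1.hasDerivAt).sub ((hdiff x hx).2.2.2.hasDerivAt)
  -- bound on g on Icc η M
  have hgb : ∀ x ∈ Icc η M, |g x| ≤ 2 * C₀ * (1 + T) := by
    intro x hx
    have hx' := hsub hx
    have h1 := hF' x hx'
    have h2 := hFb' x hx'
    have hxpow : x ^ (-(1 / 2 : ℝ)) ≤ η ^ (-(1 / 2 : ℝ)) :=
      Real.rpow_le_rpow_of_nonpos hη hx.1 (by norm_num)
    have h3 : α * x ^ (-(1 / 2 : ℝ)) * W ≤ T := by
      rw [hTdef]; gcongr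
    have h4 : |deriv F x| ≤ C₀ * (1 + T) := by
      refine h1.trans ?_
      have := h3
      nlinarith
    calc |g x| ≤ |deriv F x| + |deriv Fb x| := abs_sub _ _
      _ ≤ C₀ * (1 + T) + C₀ := add_le_add h4 h2
      _ ≤ 2 * C₀ * (1 + T) := by nlinarith
  -- the auxiliary monotone function ψ
  set ψ : ℝ → ℝ := fun x => deriv F x - 2 * K * x ^ (-(1 / 2 : ℝ)) with hψdef
  have hψd : ∀ x ∈ Ioc (0 : ℝ) M,
      HasDerivAt ψ (deriv (deriv F) x + K * x ^ (-(3 / 2 : ℝ))) x := by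
    intro x hx
    have h1 : HasDerivAt (fun y : ℝ => y ^ (-(1 / 2 : ℝ)))
        ((-(1 / 2 : ℝ)) * x ^ (-(1 / 2 : ℝ) - 1)) x :=
      Real.hasDerivAt_rpow_const (Or.inl hx.1.ne')
    have h2 := (hdiff x hx).2.2.1.hasDerivAt.sub (h1.const_mul (2 * K))
    refine h2.congr_deriv ?_
    have h3 : (-(1 / 2 : ℝ) - 1) = -(3 / 2 : ℝ) := by norm_num
    rw [h3]; ring
  have hKx : ∀ x : ℝ, K * x ^ (-(3 / 2 : ℝ)) = C₀ * α * x ^ (-(3 / 2 : ℝ)) * W := by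
    intro x; rw [hKdef]; ring
  have hψ'0 : ∀ x ∈ Ioo η M, 0 ≤ deriv (deriv F) x + K * x ^ (-(3 / 2 : ℝ)) := by
    intro x hx
    have h1 := hF'' x (hsub (Ioo_subset_Icc_self hx))
    have h2 := hKx x
    linarith
  have hψcont : ContinuousOn ψ (Icc η M) := fun x hx =>
    ((hψd x (hsub hx)).differentiableAt.continuousAt).continuousWithinAt
  have hψ'int : IntegrableOn (fun x => deriv (deriv F) x + K * x ^ (-(3 / 2 : ℝ))) (Ioc η M) :=
    intervalIntegral.integrableOn_deriv_of_nonneg hψcont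
      (fun x hx => hψd x (hsub (Ioo_subset_Icc_self hx))) hψ'0
  have hrcont : ContinuousOn (fun x : ℝ => K * x ^ (-(3 / 2 : ℝ))) (Icc η M) :=
    continuousOn_const.mul (continuousOn_id.rpow_const
      (fun x hx => Or.inl (ne_of_gt (lt_of_lt_of_le hη hx.1))))
  have hrint : IntegrableOn (fun x : ℝ => K * x ^ (-(3 / 2 : ℝ))) (Ioc η M) :=
    hrcont.integrableOn_Icc.mono_set Ioc_subset_Icc_self
  have hF''int : IntegrableOn (fun x => deriv (deriv F) x) (Ioc η M) := by
    have h := hψ'int.sub hrint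
    have h2 : ((fun x => deriv (deriv F) x + K * x ^ (-(3 / 2 : ℝ)))
        - fun x : ℝ => K * x ^ (-(3 / 2 : ℝ))) = fun x => deriv (deriv F) x := by
      funext x; simp
    rwa [h2] at h
  have hFb'cont : ContinuousOn (deriv Fb) (Icc η M) := fun x hx =>
    ((hdiff x (hsub hx)).2.2.2.continuousAt).continuousWithinAt
  have hFb''int : IntegrableOn (fun x => deriv (deriv Fb) x) (Ioc η M) :=
    intervalIntegral.integrableOn_deriv_of_nonneg hFb'cont
      (fun x hx => (hdiff x (hsub (Ioo_subset_Icc_self hx))).2.2.2.hasDerivAt)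
      (fun x hx => hFb'' x (hsub (Ioo_subset_Icc_self hx)))
  have hg'int : IntegrableOn g' (Ioc η M) := hF''int.sub hFb''int
  have hg'ii : IntervalIntegrable g' volume η M :=
    (intervalIntegrable_iff_integrableOn_Ioc_of_le hηM.le).mpr hg'int
  have hFb''ii : IntervalIntegrable (fun x => deriv (deriv Fb) x) volume η M :=
    (intervalIntegrable_iff_integrableOn_Ioc_of_le hηM.le).mpr hFb''int
  have hrii : IntervalIntegrable (fun x : ℝ => K * x ^ (-(3 / 2 : ℝ))) volume η M :=
    (intervalIntegrable_iff_integrableOn_Ioc_of_le hηM.le).mpr hrint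
  have hgcont : ContinuousOn g (Icc η M) := fun x hx =>
    (((hdiff x (hsub hx)).2.2.1.continuousAt).sub
      ((hdiff x (hsub hx)).2.2.2.continuousAt)).continuousWithinAt
  have hgii : IntervalIntegrable g volume η M :=
    ContinuousOn.intervalIntegrable (by rwa [huIcc])
  have hGcont : ContinuousOn G (Icc η M) := fun x hx =>
    ((hGd x (hsub hx)).differentiableAt.continuousAt).continuousWithinAt
  -- integration by parts
  have hIBP := intervalIntegral.integral_mul_deriv_eq_deriv_mul
    (u := G) (v := g) (u' := g) (v' := g')
    (fun x hx => hGd x (hsub (huIcc ▸ hx)))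
    (fun x hx => hgd x (hsub (huIcc ▸ hx)))
    hgii hg'ii
  -- FTC computations
  have hFTCg : ∫ x in η..M, g' x = g M - g η :=
    intervalIntegral.integral_eq_sub_of_hasDerivAt
      (fun x hx => hgd x (hsub (huIcc ▸ hx))) hg'ii
  have hFTCb : ∫ x in η..M, deriv (deriv Fb) x = deriv Fb M - deriv Fb η :=
    intervalIntegral.integral_eq_sub_of_hasDerivAt
      (fun x hx => (hdiff x (hsub (huIcc ▸ hx))).2.2.2.hasDerivAt) hFb''ii
  have hrval : ∫ x in η..M, x ^ (-(3 / 2 : ℝ)) ≤ 2 * η ^ (-(1 / 2 : ℝ)) := by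
    rw [integral_rpow (Or.inr ⟨by norm_num, by
      rw [huIcc]; exact fun h => absurd h.1 (not_le.mpr hη)⟩)]
    have h1 : (-(3 / 2 : ℝ)) + 1 = -(1 / 2 : ℝ) := by norm_num
    rw [h1, div_le_iff_of_neg (by norm_num : (-(1 / 2 : ℝ)) < 0)]
    have h2 : 0 ≤ M ^ (-(1 / 2 : ℝ)) := Real.rpow_nonneg h0M _
    nlinarith
  have hrval' : ∫ x in η..M, K * x ^ (-(3 / 2 : ℝ)) ≤ 2 * C₀ * T := by
    rw [intervalIntegral.integral_const_mul]
    have h1 : K * (2 * η ^ (-(1 / 2 : ℝ))) = 2 * C₀ * T := by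
      rw [hKdef, hTdef]; ring
    calc K * ∫ x in η..M, x ^ (-(3 / 2 : ℝ)) ≤ K * (2 * η ^ (-(1 / 2 : ℝ))) := by
          apply mul_le_mul_of_nonneg_left hrval hK0
      _ = 2 * C₀ * T := h1
  -- pointwise bound on |G x * g' x|
  have habs : ∀ x ∈ Icc η M, |G x * g' x|
      ≤ S * (g' x + 2 * deriv (deriv Fb) x + 2 * (K * x ^ (-(3 / 2 : ℝ)))) := by
    intro x hx
    have hx' := hsub hx
    have h1 : 0 ≤ deriv (deriv Fb) x := hFb'' x hx'
    have h2 := hF'' x hx'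
    have h3 := hKx x
    have hKx0 : 0 ≤ K * x ^ (-(3 / 2 : ℝ)) :=
      mul_nonneg hK0 (Real.rpow_nonneg (le_trans hη.le hx.1) _)
    have hg'x : g' x = deriv (deriv F) x - deriv (deriv Fb) x := rfl
    have hg'abs : |g' x| ≤ g' x + 2 * deriv (deriv Fb) x + 2 * (K * x ^ (-(3 / 2 : ℝ))) := by
      rw [abs_le]
      constructor
      · rw [hg'x]; linarith
      · rw [hg'x]; linarith
    calc |G x * g' x| = |G x| * |g' x| := abs_mul _ _
      _ ≤ S * (g' x + 2 * deriv (deriv Fb) x + 2 * (K * x ^ (-(3 / 2 : ℝ)))) :=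
          mul_le_mul (hGS x (hsub2 hx)) hg'abs (abs_nonneg _) hS0
  -- integrability of the product and bound
  have hGg'ii : IntervalIntegrable (fun x => G x * g' x) volume η M :=
    hg'ii.continuousOn_mul (by rwa [huIcc])
  have hGg'absii : IntervalIntegrable (fun x => |G x * g' x|) volume η M := hGg'ii.abs
  have hboundii : IntervalIntegrable
      (fun x => S * (g' x + 2 * deriv (deriv Fb) x + 2 * (K * x ^ (-(3 / 2 : ℝ)))))
      volume η M :=
    (((hg'ii.add (hFb''ii.const_mul 2)).add (hrii.const_mul 2)).const_mul S)
  -- bound the integral of |G g'|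
  have hmain : |∫ x in η..M, G x * g' x|
      ≤ S * ((g M - g η) + 2 * (deriv Fb M - deriv Fb η) + 2 * (2 * C₀ * T)) := by
    calc |∫ x in η..M, G x * g' x| ≤ ∫ x in η..M, |G x * g' x| :=
          intervalIntegral.abs_integral_le_integral_abs hηM.le
      _ ≤ ∫ x in η..M, S * (g' x + 2 * deriv (deriv Fb) x + 2 * (K * x ^ (-(3 / 2 : ℝ)))) :=
          intervalIntegral.integral_mono_on hηM.le hGg'absii hboundii habs
      _ = S * ((∫ x in η..M, g' x) + 2 * (∫ x in η..M, deriv (deriv Fb) x)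
            + 2 * (∫ x in η..M, K * x ^ (-(3 / 2 : ℝ)))) := by
          rw [intervalIntegral.integral_const_mul,
            intervalIntegral.integral_add (hg'ii.add (hFb''ii.const_mul 2)) (hrii.const_mul 2),
            intervalIntegral.integral_add hg'ii (hFb''ii.const_mul 2),
            intervalIntegral.integral_const_mul, intervalIntegral.integral_const_mul]
      _ ≤ S * ((g M - g η) + 2 * (deriv Fb M - deriv Fb η) + 2 * (2 * C₀ * T)) := by
          rw [hFTCg, hFTCb]
          apply mul_le_mul_of_nonneg_left _ hS0
          gcongr
  -- boundary terms
  have hMem : M ∈ Icc η M := ⟨hηM.le, le_rfl⟩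
  have hηmem : η ∈ Icc η M := ⟨le_rfl, hηM.le⟩
  have hbM : |G M * g M| ≤ S * (2 * C₀ * (1 + T)) := by
    rw [abs_mul]
    exact mul_le_mul (hGS M (hsub2 hMem)) (hgb M hMem) (abs_nonneg _) hS0
  have hbη : |G η * g η| ≤ S * (2 * C₀ * (1 + T)) := by
    rw [abs_mul]
    exact mul_le_mul (hGS η (hsub2 hηmem)) (hgb η hηmem) (abs_nonneg _) hS0
  -- bounds on g M - g η and deriv Fb M - deriv Fb η
  have hgM := hgb M hMem
  have hgη := hgb η hηmem
  have hbbM := hFb' M (hsub hMem)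
  have hbbη := hFb' η (hsub hηmem)
  -- final assembly
  have hkey : ∫ x in η..M, g x * g x
      = G M * g M - G η * g η - ∫ x in η..M, G x * g' x := by linarith
  have hLHS : (∫ h₂ in Ioc η M, (deriv F h₂ - deriv Fb h₂) ^ 2)
      = ∫ x in η..M, g x * g x := by
    rw [intervalIntegral.integral_of_le hηM.le]
    simp only [hgdef, pow_two]
  rw [hLHS, hkey]
  have habs1 := abs_le.mp hbM
  have habs2 := abs_le.mp hbη
  have habs3 := abs_le.mp hmain
  have habs4 := abs_le.mp hgM
  have habs5 := abs_le.mp hgη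
  have habs6 := abs_le.mp hbbM
  have habs7 := abs_le.mp hbbη
  have hSC : 0 ≤ S * C₀ * T := by positivity
  have hSC2 : 0 ≤ S * C₀ := by positivity
  have hmain2 : |∫ x in η..M, G x * g' x|
      ≤ S * (2 * C₀ * (1 + T) + 2 * C₀ * (1 + T) + 2 * C₀ + 2 * C₀ + 4 * C₀ * T) :=
    hmain.trans (mul_le_mul_of_nonneg_left (by linarith) hS0)
  have habs3 := abs_le.mp hmain2
  nlinarith [mul_nonneg hS0 hT0, mul_nonneg hS0 hC₀.le,
    mul_nonneg (mul_nonneg hS0 hC₀.le) hT0]
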